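/- Suppose N ≥ 2 and M = {x₀} is a single marked element, and let θ = arcsin(1/√N) and k = ⌊π/(4θ)⌋. Then k ≤ (π/4)·√N, and the probability of measuring x₀ after k Grover iterations satisfies ((G^k u)_{x₀})² ≥ 1 − 1/N. -/

import Mathlib

open Real

/-- For a single marked element `x₀` out of `N ≥ 2` elements, with
`θ = arcsin(1/√N)` and `k = ⌊π/(4θ)⌋`, we have `k ≤ (π/4)√N` and the
probability of measuring `x₀` after `k` Grover iterations is at least
`1 - 1/N`. -/
theorem grover_single_marked_element
    (N : ℕ) (hN : 2 ≤ N) (x₀ : Fin N)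
    (u : EuclideanSpace ℝ (Fin N))
    (hu : ∀ i, u i = 1 / Real.sqrt N)
    (θ : ℝ) (hθ : θ = Real.arcsin (1 / Real.sqrt N))
    (O D : EuclideanSpace ℝ (Fin N) →ₗ[ℝ] EuclideanSpace ℝ (Fin N))
    (hO : ∀ x, ∀ i, O x i = if i = x₀ then -x i else x i)
    (hD : ∀ x, D x = (2 * (inner ℝ u x : ℝ)) • u - x)
    (k : ℕ) (hk : k = ⌊Real.pi / (4 * θ)⌋₊) :
    (k : ℝ) ≤ (Real.pi / 4) * Real.sqrt N ∧
      ((⇑D ∘ ⇑O)^[k] u x₀) ^ 2 ≥ 1 - 1 / N := by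
  have hn2 : (2:ℝ) ≤ (N:ℝ) := by exact_mod_cast hN
  set n : ℝ := (N:ℝ) with hn
  have hn0 : (0:ℝ) < n := by linarith
  obtain ⟨s, hs⟩ : ∃ s : ℝ, s = Real.sqrt n := ⟨_, rfl⟩
  obtain ⟨t, ht⟩ : ∃ t : ℝ, t = Real.sqrt (n-1) := ⟨_, rfl⟩
  have hs0 : 0 < s := hs ▸ Real.sqrt_pos.2 hn0
  have ht0 : 0 < t := ht ▸ Real.sqrt_pos.2 (by linarith)
  have hs2 : s^2 = n := by rw [hs]; exact Real.sq_sqrt hn0.le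
  have ht2 : t^2 = n - 1 := by rw [ht]; exact Real.sq_sqrt (by linarith)
  have hu' : ∀ i, u i = 1/s := by intro i; rw [hu i, hs]
  have hθ' : θ = Real.arcsin (1/s) := by rw [hθ, hs]
  have hs1 : 1 ≤ s := by nlinarith
  have hinv1 : 1/s ≤ 1 := by rw [div_le_one hs0]; exact hs1
  have hinv0 : (0:ℝ) < 1/s := by positivity
  have hsin : Real.sin θ = 1/s := by
    rw [hθ']; exact Real.sin_arcsin (by linarith) hinv1
  have hcos : Real.cos θ = t/s := by
    rw [hθ', Real.cos_arcsin, div_pow, one_pow, hs2,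
      show (1 : ℝ) - 1/n = (n-1)/n by field_simp,
      Real.sqrt_div (by linarith), ← hs, ← ht]
  have hθpos : 0 < θ := by
    rw [hθ']; exact Real.arcsin_pos.2 hinv0
  have hθle : θ ≤ π/2 := hθ' ▸ Real.arcsin_le_pi_div_two _
  have sum_ite : ∀ (c₁ c₂ : ℝ),
      ∑ i : Fin N, (if i = x₀ then c₁ else c₂) = c₁ + (n-1)*c₂ := by
    intro c₁ c₂
    have h : ∀ i : Fin N, (if i = x₀ then c₁ else c₂)
        = c₂ + (if i = x₀ then c₁ - c₂ else 0) := by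
      intro i; split <;> ring
    rw [Finset.sum_congr rfl (fun i _ => h i), Finset.sum_add_distrib,
      Finset.sum_ite_eq' Finset.univ x₀ (fun _ => c₁ - c₂)]
    simp [Finset.card_univ]
    ring
  have key : ∀ j : ℕ, ∀ i : Fin N,
      (⇑D ∘ ⇑O)^[j] u i =
        if i = x₀ then Real.sin ((2*j+1)*θ) else Real.cos ((2*j+1)*θ) / t := by
    intro j
    induction j with
    | zero =>
      intro i
      simp only [Function.iterate_zero, id_eq, Nat.cast_zero]
      rw [hu' i, show (2*(0:ℝ)+1)*θ = θ by ring]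
      split
      · exact hsin.symm
      · rw [hcos]; field_simp
    | succ j ih =>
      intro i
      rw [Function.iterate_succ_apply']
      obtain ⟨v, hv⟩ : ∃ v, v = (⇑D ∘ ⇑O)^[j] u := ⟨_, rfl⟩
      obtain ⟨a, ha⟩ : ∃ a : ℝ, a = Real.sin ((2*j+1)*θ) := ⟨_, rfl⟩
      obtain ⟨c, hc⟩ : ∃ c : ℝ, c = Real.cos ((2*j+1)*θ) := ⟨_, rfl⟩
      rw [← hv]
      have ih' : ∀ i', v i' = if i' = x₀ then a else c/t := by
        intro i'; rw [hv, ih i', ← ha, ← hc]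
      have hOv : ∀ i', O v i' = if i' = x₀ then -a else c/t := by
        intro i'
        rw [hO v i', ih' i']
        split <;> simp
      have hinner : (inner ℝ u (O v) : ℝ) = (1/s) * (-a + t*c) := by
        rw [show (inner ℝ u (O v) : ℝ) = ∑ i', u i' * (O v i') by
          simp [PiLp.inner_apply, RCLike.inner_apply, mul_comm]]
        have he : ∀ i', u i' * (O v i')
            = if i' = x₀ then (1/s)*(-a) else (1/s)*(c/t) := by
          intro i'
          rw [hu' i', hOv i']
          split <;> ring
        rw [Finset.sum_congr rfl (fun i' _ => he i'), sum_ite, ← ht2]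
        field_simp
      have hDapp : (⇑D ∘ ⇑O) v i = 2 * ((1/s) * (-a + t*c)) * (1/s) - (O v i) := by
        simp only [Function.comp_apply]
        rw [hD (O v)]
        simp only [PiLp.sub_apply, PiLp.smul_apply, smul_eq_mul, hinner, hu' i]
        try ring
      rw [hDapp, hOv i]
      have h2θs : Real.sin (2*θ) = 2*t/n := by
        rw [Real.sin_two_mul, hsin, hcos, ← hs2]; field_simp
      have h2θc : Real.cos (2*θ) = 1 - 2/n := by
        rw [Real.cos_two_mul, hcos, div_pow, hs2, ht2]
        field_simp
        ring
      have hang : (2*((j:ℝ)+1)+1)*θ = (2*(j:ℝ)+1)*θ + 2*θ := by ring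
      push_cast
      rw [hang, Real.sin_add, Real.cos_add, ← ha, ← hc, h2θs, h2θc]
      have hred : 2*((1/s)*(-a + t*c))*(1/s) = (2/n)*(-a + t*c) := by
        rw [← hs2]; ring
      split
      · rw [hred]; ring
      · rw [hred]
        field_simp
        linear_combination (2*c) * ht2
  -- angle bounds
  have hsinle : 1/s ≤ θ := by
    rw [← hsin]; exact Real.sin_le hθpos.le
  have hπ0 := Real.pi_pos
  have h4θ : (0:ℝ) < 4*θ := by linarith
  have hkle : (k:ℝ) ≤ π/(4*θ) := by
    rw [hk]; exact Nat.floor_le (by positivity)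
  have hklt : π/(4*θ) < (k:ℝ) + 1 := by
    rw [hk]; exact Nat.lt_floor_add_one _
  have hkle' : (k:ℝ)*(4*θ) ≤ π := (le_div_iff₀ h4θ).1 hkle
  have hklt' : π < ((k:ℝ)+1)*(4*θ) := (div_lt_iff₀ h4θ).1 hklt
  constructor
  · rw [← hs]
    calc (k:ℝ) ≤ π/(4*θ) := hkle
      _ ≤ (π/4) * s := by
        rw [div_le_iff₀ h4θ]
        have h1 : π * (1/s) ≤ π * θ := mul_le_mul_of_nonneg_left hsinle hπ0.le
        have h2 : π * (1/s) = π / s := by ring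
        rw [h2, div_le_iff₀ hs0] at h1
        nlinarith
  · rw [key k x₀, if_pos rfl]
    obtain ⟨φ, hφ⟩ : ∃ φ : ℝ, φ = (2*(k:ℝ)+1)*θ := ⟨_, rfl⟩
    rw [← hφ]
    have e1 : φ = ((k:ℝ)*(4*θ))/2 + θ := by rw [hφ]; ring
    have e2 : φ = (((k:ℝ)+1)*(4*θ))/2 - θ := by rw [hφ]; ring
    have hA : φ ≤ π/2 + θ := by rw [e1]; linarith
    have hB : π/2 - θ < φ := by rw [e2]; linarith
    have hδ1 : -θ ≤ π/2 - φ := by linarith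
    have hδ2 : π/2 - φ ≤ θ := by linarith
    have hmemδ : π/2 - φ ∈ Set.Icc (-(π/2)) (π/2) := ⟨by linarith, by linarith⟩
    have hmemθ : θ ∈ Set.Icc (-(π/2)) (π/2) := ⟨by linarith, hθle⟩
    have hmemθ' : -θ ∈ Set.Icc (-(π/2)) (π/2) := ⟨by linarith, by linarith⟩
    have hub : Real.sin (π/2 - φ) ≤ Real.sin θ :=
      Real.strictMonoOn_sin.monotoneOn hmemδ hmemθ hδ2
    have hlb : -Real.sin θ ≤ Real.sin (π/2 - φ) := by
      have := Real.strictMonoOn_sin.monotoneOn hmemθ' hmemδ hδ1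
      rwa [Real.sin_neg] at this
    have hcosφ : Real.cos φ = Real.sin (π/2 - φ) := (Real.sin_pi_div_two_sub φ).symm
    have hsq : Real.cos φ ^ 2 ≤ Real.sin θ ^ 2 := by
      rw [hcosφ]; exact sq_le_sq' hlb hub
    have hpyth := Real.sin_sq_add_cos_sq φ
    have hsinθsq : Real.sin θ ^ 2 = 1/n := by
      rw [hsin, div_pow, one_pow, hs2]
    rw [hsinθsq] at hsq
    have : (1:ℝ) - 1/n ≤ Real.sin φ ^ 2 := by linarith
    exact this
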